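/- Let M^1 and M^2 be sequences of positive reals. Then F^{M^1} ⊆ F^{M^2} if and only if there exist constants C, ρ > 0 such that M^1_k ≤ C · ρ^k · M^2_k for all k. -/

import Mathlib

/-- Membership in the formal power series class `𝓕^M`. -/
def InFclass (M : ℕ → ℝ) (f : ℕ → ℝ) : Prop :=
  ∃ C : ℝ, 0 < C ∧ ∃ ρ : ℝ, 0 < ρ ∧
    ∀ k, |f k| ≤ C * ρ ^ k * (k.factorial : ℝ) * M k

/-- `𝓕^{M¹} ⊆ 𝓕^{M²}` iff `M¹_k ≤ C ρ^k M²_k` for some constants `C, ρ > 0`. -/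
theorem stmt5 (M1 M2 : ℕ → ℝ) (h1 : ∀ k, 0 < M1 k) (h2 : ∀ k, 0 < M2 k) :
    (∀ f, InFclass M1 f → InFclass M2 f) ↔
      ∃ C : ℝ, 0 < C ∧ ∃ ρ : ℝ, 0 < ρ ∧ ∀ k, M1 k ≤ C * ρ ^ k * M2 k := by
  constructor
  · intro h
    obtain ⟨C, hC, ρ, hρ, hb⟩ := h (fun k => (k.factorial : ℝ) * M1 k)
      ⟨1, one_pos, 1, one_pos, fun k => by
        rw [abs_of_pos (mul_pos (by positivity) (h1 k))]; ring_nf; rfl⟩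
    refine ⟨C, hC, ρ, hρ, fun k => ?_⟩
    have := hb k
    rw [abs_of_pos (mul_pos (by positivity) (h1 k))] at this
    have hf : (0:ℝ) < (k.factorial : ℝ) := by positivity
    calc M1 k = (k.factorial : ℝ) * M1 k / (k.factorial : ℝ) := by field_simp
      _ ≤ C * ρ ^ k * (k.factorial : ℝ) * M2 k / (k.factorial : ℝ) := by
          exact by gcongr
      _ = C * ρ ^ k * M2 k := by field_simp
  · rintro ⟨C, hC, ρ, hρ, hM⟩ f ⟨C', hC', ρ', hρ', hb⟩
    refine ⟨C' * C, by positivity, ρ' * ρ, by positivity, fun k => ?_⟩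
    calc |f k| ≤ C' * ρ' ^ k * (k.factorial : ℝ) * M1 k := hb k
      _ ≤ C' * ρ' ^ k * (k.factorial : ℝ) * (C * ρ ^ k * M2 k) := by
          apply mul_le_mul_of_nonneg_left (hM k) (by positivity)
      _ = C' * C * (ρ' * ρ) ^ k * (k.factorial : ℝ) * M2 k := by
          rw [mul_pow]; ring
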